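/- Let D = [U′,U] × [V′,V] ⊂ ℝ², let r, Ω : D → ℝ be C² with Ω > 0 and 0 < r₀ ≤ r ≤ R on D, and let G : D → ℝ be continuous with G ≥ 0. Suppose r ∂_u∂_v r = −(1/4)Ω² − (∂_u r)(∂_v r) + G on D. Then ∫_{V′}^{V} ∫_{U′}^{U} G(u,v) du dv ≤ (R² − r₀²) + (1/4) ∫_{V′}^{V} ∫_{U′}^{U} Ω²(u,v) du dv. -/

import Mathlib

open Set intervalIntegral

/-- Fundamental a priori spacetime integral estimate: from the wave equation
`r ∂_u∂_v r = −Ω²/4 − (∂_u r)(∂_v r) + G` with `G ≥ 0` and `r₀ ≤ r ≤ R`, the spacetime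
integral of `G` is bounded by `(R² − r₀²) + ¼ ∫∫ Ω²`. -/
theorem spacetime_integral_estimate
    (U' U V' V r₀ R : ℝ) (hU : U' ≤ U) (hV : V' ≤ V)
    (r Ω G : ℝ → ℝ → ℝ)
    (hrC2 : ContDiffOn ℝ 2 (fun p : ℝ × ℝ => r p.1 p.2) (Icc U' U ×ˢ Icc V' V))
    (hΩC2 : ContDiffOn ℝ 2 (fun p : ℝ × ℝ => Ω p.1 p.2) (Icc U' U ×ˢ Icc V' V))
    (hΩpos : ∀ u ∈ Icc U' U, ∀ v ∈ Icc V' V, 0 < Ω u v)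
    (hr₀ : 0 < r₀)
    (hrlow : ∀ u ∈ Icc U' U, ∀ v ∈ Icc V' V, r₀ ≤ r u v)
    (hrhigh : ∀ u ∈ Icc U' U, ∀ v ∈ Icc V' V, r u v ≤ R)
    (hGcont : ContinuousOn (fun p : ℝ × ℝ => G p.1 p.2) (Icc U' U ×ˢ Icc V' V))
    (hGpos : ∀ u ∈ Icc U' U, ∀ v ∈ Icc V' V, 0 ≤ G u v)
    (hwave : ∀ u ∈ Icc U' U, ∀ v ∈ Icc V' V,
      r u v * deriv (fun u' => deriv (fun v' => r u' v') v) u =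
        -(1 / 4) * (Ω u v) ^ 2
          - (deriv (fun u' => r u' v) u) * (deriv (fun v' => r u v') v) + G u v) :
    (∫ v in V'..V, ∫ u in U'..U, G u v) ≤
      (R ^ 2 - r₀ ^ 2) + (1 / 4) * ∫ v in V'..V, ∫ u in U'..U, (Ω u v) ^ 2 := by
  have hr₀R : r₀ ≤ R :=
    le_trans (hrlow U (right_mem_Icc.mpr hU) V (right_mem_Icc.mpr hV))
      (hrhigh U (right_mem_Icc.mpr hU) V (right_mem_Icc.mpr hV))
  rcases eq_or_lt_of_le hU with rfl | hUlt
  · simp only [intervalIntegral.integral_same, intervalIntegral.integral_zero]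
    nlinarith
  rcases eq_or_lt_of_le hV with rfl | hVlt
  · simp only [intervalIntegral.integral_same]
    nlinarith
  -- notation
  set D : Set (ℝ × ℝ) := Icc U' U ×ˢ Icc V' V with hDdef
  set f : ℝ × ℝ → ℝ := fun p => r p.1 p.2 with hfdef
  have hDuniq : UniqueDiffOn ℝ D := (uniqueDiffOn_Icc hUlt).prod (uniqueDiffOn_Icc hVlt)
  have hdiff : DifferentiableOn ℝ f D := hrC2.differentiableOn two_ne_zero
  set rv : ℝ → ℝ → ℝ := fun u v => fderivWithin ℝ f D (u, v) (0, 1) with hrvdef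
  set ru : ℝ → ℝ → ℝ := fun u v => fderivWithin ℝ f D (u, v) (1, 0) with hrudef
  -- slice derivatives within the rectangle
  have hslicev : ∀ u ∈ Icc U' U, ∀ v ∈ Icc V' V,
      HasDerivWithinAt (fun v' => r u v') (rv u v) (Icc V' V) v := by
    intro u hu v hv
    have hf : HasFDerivWithinAt f (fderivWithin ℝ f D (u, v)) D (u, v) :=
      (hdiff (u, v) ⟨hu, hv⟩).hasFDerivWithinAt
    have hι : HasDerivWithinAt (fun v' : ℝ => ((u : ℝ), v')) ((0 : ℝ), (1 : ℝ)) (Icc V' V) v :=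
      ((hasDerivAt_const v u).prodMk (hasDerivAt_id v)).hasDerivWithinAt
    exact hf.comp_hasDerivWithinAt v hι (fun v' hv' => ⟨hu, hv'⟩)
  have hsliceu : ∀ v ∈ Icc V' V, ∀ u ∈ Icc U' U,
      HasDerivWithinAt (fun u' => r u' v) (ru u v) (Icc U' U) u := by
    intro v hv u hu
    have hf : HasFDerivWithinAt f (fderivWithin ℝ f D (u, v)) D (u, v) :=
      (hdiff (u, v) ⟨hu, hv⟩).hasFDerivWithinAt
    have hι : HasDerivWithinAt (fun u' : ℝ => (u', (v : ℝ))) ((1 : ℝ), (0 : ℝ)) (Icc U' U) u :=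
      ((hasDerivAt_id u).prodMk (hasDerivAt_const u v)).hasDerivWithinAt
    exact hf.comp_hasDerivWithinAt u hι (fun u' hu' => (⟨hu', hv⟩ : (u', v) ∈ D))
  -- genuine derivatives at interior points of each interval
  have hdv : ∀ u ∈ Icc U' U, ∀ v ∈ Ioo V' V, HasDerivAt (fun v' => r u v') (rv u v) v :=
    fun u hu v hv =>
      (hslicev u hu v (Ioo_subset_Icc_self hv)).hasDerivAt (Icc_mem_nhds hv.1 hv.2)
  have hdu : ∀ v ∈ Icc V' V, ∀ u ∈ Ioo U' U, HasDerivAt (fun u' => r u' v) (ru u v) u :=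
    fun v hv u hu =>
      (hsliceu v hv u (Ioo_subset_Icc_self hu)).hasDerivAt (Icc_mem_nhds hu.1 hu.2)
  have hderiv_v : ∀ u ∈ Icc U' U, ∀ v ∈ Ioo V' V, deriv (fun v' => r u v') v = rv u v :=
    fun u hu v hv => (hdv u hu v hv).deriv
  have hderiv_u : ∀ v ∈ Icc V' V, ∀ u ∈ Ioo U' U, deriv (fun u' => r u' v) u = ru u v :=
    fun v hv u hu => (hdu v hv u hu).deriv
  -- the rectangle is a neighbourhood of interior points
  have hDnhds : ∀ u ∈ Ioo U' U, ∀ v ∈ Ioo V' V, D ∈ nhds (u, v) := by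
    intro u hu v hv
    have h1 : Ioo U' U ×ˢ Ioo V' V ∈ nhds ((u : ℝ), (v : ℝ)) :=
      (isOpen_Ioo.prod isOpen_Ioo).mem_nhds ⟨hu, hv⟩
    exact Filter.mem_of_superset h1
      (prod_mono Ioo_subset_Icc_self Ioo_subset_Icc_self)
  -- differentiability of the mixed-derivative function at interior points
  have hmix : ∀ v ∈ Ioo V' V, ∀ u ∈ Ioo U' U,
      DifferentiableAt ℝ (fun u' => deriv (fun v' => r u' v') v) u := by
    intro v hv u hu
    have hfC2at : ContDiffAt ℝ 2 f (u, v) := hrC2.contDiffAt (hDnhds u hu v hv)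
    have h1 : ContDiffAt ℝ 1 (fderiv ℝ f) ((u : ℝ), (v : ℝ)) :=
      hfC2at.fderiv_right (by norm_num)
    have hemb : DifferentiableAt ℝ (fun u' : ℝ => (u', (v : ℝ))) u :=
      differentiableAt_id.prodMk (differentiableAt_const v)
    have h2 : DifferentiableAt ℝ (fun u' : ℝ => fderiv ℝ f (u', v)) u :=
      (h1.differentiableAt one_ne_zero).comp u hemb
    have h3 : DifferentiableAt ℝ (fun u' : ℝ => fderiv ℝ f (u', v) ((0 : ℝ), (1 : ℝ))) u :=
      h2.clm_apply (differentiableAt_const _)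
    refine h3.congr_of_eventuallyEq ?_
    filter_upwards [Ioo_mem_nhds hu.1 hu.2] with u' hu'
    rw [hderiv_v u' (Ioo_subset_Icc_self hu') v hv, hrvdef]
    simp only
    rw [fderivWithin_of_mem_nhds (hDnhds u' hu' v hv)]
  -- the key derivative identity for ψ(·, v)
  set ψ : ℝ → ℝ → ℝ := fun u v => r u v * rv u v with hψdef
  have key1 : ∀ v ∈ Ioo V' V, ∀ u ∈ Ioo U' U,
      HasDerivAt (fun u' => ψ u' v)
        (G u v - 1 / 4 * Ω u v ^ 2) u := by
    intro v hv u hu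
    have hvIcc : v ∈ Icc V' V := Ioo_subset_Icc_self hv
    have huIcc : u ∈ Icc U' U := Ioo_subset_Icc_self hu
    have hg : HasDerivAt (fun u' => deriv (fun v' => r u' v') v)
        (deriv (fun u' => deriv (fun v' => r u' v') v) u) u :=
      (hmix v hv u hu).hasDerivAt
    have hprod : HasDerivAt
        (fun u' => r u' v * deriv (fun v' => r u' v') v)
        (ru u v * deriv (fun v' => r u v') v
          + r u v * deriv (fun u' => deriv (fun v' => r u' v') v) u) u :=
      (hdu v hvIcc u hu).mul hg
    have heq : (fun u' => ψ u' v) =ᶠ[nhds u]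
        (fun u' => r u' v * deriv (fun v' => r u' v') v) := by
      filter_upwards [Ioo_mem_nhds hu.1 hu.2] with u' hu'
      rw [hψdef]
      simp only
      rw [hderiv_v u' (Ioo_subset_Icc_self hu') v hv]
    have := hprod.congr_of_eventuallyEq heq
    refine this.congr_deriv ?_
    have hw := hwave u huIcc v hvIcc
    rw [hderiv_u v hvIcc u hu] at hw
    rw [hderiv_v u huIcc v hv] at hw ⊢
    linarith [hw]
  -- continuity of the various quantities on the rectangle
  have hrcont : ContinuousOn f D := hrC2.continuousOn
  have hrvcont : ContinuousOn (fun p : ℝ × ℝ => rv p.1 p.2) D := by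
    have h1 : ContinuousOn (fderivWithin ℝ f D) D :=
      hrC2.continuousOn_fderivWithin hDuniq one_le_two
    exact h1.clm_apply continuousOn_const
  have hψcont : ContinuousOn (fun p : ℝ × ℝ => ψ p.1 p.2) D := hrcont.mul hrvcont
  -- slice continuity
  have hψcont_u : ∀ v ∈ Icc V' V, ContinuousOn (fun u => ψ u v) (Icc U' U) := fun v hv =>
    hψcont.comp ((continuous_id.prodMk continuous_const).continuousOn)
      (fun u hu => ⟨hu, hv⟩)
  have hψcont_v : ∀ u ∈ Icc U' U, ContinuousOn (fun v => ψ u v) (Icc V' V) := fun u hu =>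
    hψcont.comp ((continuous_const.prodMk continuous_id).continuousOn)
      (fun v hv => ⟨hu, hv⟩)
  have hGcont_u : ∀ v ∈ Icc V' V, ContinuousOn (fun u => G u v) (Icc U' U) := fun v hv =>
    hGcont.comp ((continuous_id.prodMk continuous_const).continuousOn)
      (fun u hu => ⟨hu, hv⟩)
  have hΩcont : ContinuousOn (fun p : ℝ × ℝ => Ω p.1 p.2) D := hΩC2.continuousOn
  have hΩ2cont_u : ∀ v ∈ Icc V' V, ContinuousOn (fun u => Ω u v ^ 2) (Icc U' U) := fun v hv =>
    (hΩcont.comp ((continuous_id.prodMk continuous_const).continuousOn)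
      (fun u hu => ⟨hu, hv⟩)).pow 2
  -- inner fundamental theorem of calculus
  have inner_eq : ∀ v ∈ Ioo V' V,
      (∫ u in U'..U, G u v) =
        ψ U v - ψ U' v + 1 / 4 * ∫ u in U'..U, Ω u v ^ 2 := by
    intro v hv
    have hvIcc : v ∈ Icc V' V := Ioo_subset_Icc_self hv
    have hGi : IntervalIntegrable (fun u => G u v) MeasureTheory.volume U' U :=
      ContinuousOn.intervalIntegrable (by rw [uIcc_of_le hU]; exact hGcont_u v hvIcc)
    have hΩi : IntervalIntegrable (fun u => 1 / 4 * Ω u v ^ 2) MeasureTheory.volume U' U :=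
      ContinuousOn.intervalIntegrable
        (by rw [uIcc_of_le hU]; exact continuousOn_const.mul (hΩ2cont_u v hvIcc))
    have hftc : ∫ u in U'..U, (G u v - 1 / 4 * Ω u v ^ 2) = ψ U v - ψ U' v :=
      intervalIntegral.integral_eq_sub_of_hasDerivAt_of_le hU (hψcont_u v hvIcc)
        (fun u hu => key1 v hv u hu) (hGi.sub hΩi)
    rw [intervalIntegral.integral_sub hGi hΩi, intervalIntegral.integral_const_mul] at hftc
    linarith [hftc]
  -- clamping maps, to globalize continuity
  set πU : ℝ → ℝ := fun x => max U' (min x U) with hπU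
  set πV : ℝ → ℝ := fun x => max V' (min x V) with hπV
  have hπUmem : ∀ x, πU x ∈ Icc U' U := fun x => ⟨le_max_left _ _, max_le hU (min_le_right _ _)⟩
  have hπVmem : ∀ x, πV x ∈ Icc V' V := fun x => ⟨le_max_left _ _, max_le hV (min_le_right _ _)⟩
  have hπUid : ∀ x ∈ Icc U' U, πU x = x := fun x hx => by
    simp only [hπU]; rw [min_eq_left hx.2, max_eq_right hx.1]
  have hπVid : ∀ x ∈ Icc V' V, πV x = x := fun x hx => by
    simp only [hπV]; rw [min_eq_left hx.2, max_eq_right hx.1]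
  have hπUcont : Continuous πU := continuous_const.max (continuous_id.min continuous_const)
  have hπVcont : Continuous πV := continuous_const.max (continuous_id.min continuous_const)
  have hclamp : Continuous (fun p : ℝ × ℝ => ((πU p.1), (πV p.2))) :=
    (hπUcont.comp continuous_fst).prodMk (hπVcont.comp continuous_snd)
  have hΩt : Continuous (fun p : ℝ × ℝ => Ω (πU p.1) (πV p.2) ^ 2) :=
    (hΩcont.comp_continuous hclamp (fun p => ⟨hπUmem _, hπVmem _⟩)).pow 2
  have hΦcont : Continuous (fun v => ∫ u in U'..U, Ω (πU u) (πV v) ^ 2) := by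
    apply intervalIntegral.continuous_parametric_intervalIntegral_of_continuous'
      (μ := MeasureTheory.volume)
    exact hΩt.comp continuous_swap
  -- boundary terms via the fundamental theorem of calculus in v
  have bdry : ∀ u ∈ Icc U' U,
      (∫ v in V'..V, ψ u v) = 1 / 2 * (r u V ^ 2 - r u V' ^ 2) := by
    intro u hu
    have hrcont_v : ContinuousOn (fun v => r u v) (Icc V' V) :=
      hrcont.comp ((continuous_const.prodMk continuous_id).continuousOn)
        (fun v hv => ⟨hu, hv⟩)
    have hcont : ContinuousOn (fun v => r u v ^ 2) (Icc V' V) := hrcont_v.pow 2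
    have hψi : IntervalIntegrable (fun v => 2 * ψ u v) MeasureTheory.volume V' V :=
      ContinuousOn.intervalIntegrable
        (by rw [uIcc_of_le hV]; exact continuousOn_const.mul (hψcont_v u hu))
    have hder : ∀ v ∈ Ioo V' V, HasDerivAt (fun v' => r u v' ^ 2) (2 * ψ u v) v := by
      intro v hv
      have h1 := (hdv u hu v hv).pow 2
      refine h1.congr_deriv ?_
      simp only [hψdef]
      push_cast
      ring
    have hftc := intervalIntegral.integral_eq_sub_of_hasDerivAt_of_le hV hcont hder hψi
    rw [intervalIntegral.integral_const_mul] at hftc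
    linarith [hftc]
  -- integrability of the boundary/volume terms
  have hψUi : IntervalIntegrable (fun v => ψ U v) MeasureTheory.volume V' V :=
    ContinuousOn.intervalIntegrable
      (by rw [uIcc_of_le hV]; exact hψcont_v U (right_mem_Icc.mpr hU))
  have hψU'i : IntervalIntegrable (fun v => ψ U' v) MeasureTheory.volume V' V :=
    ContinuousOn.intervalIntegrable
      (by rw [uIcc_of_le hV]; exact hψcont_v U' (left_mem_Icc.mpr hU))
  have hΦi : IntervalIntegrable (fun v => 1 / 4 * ∫ u in U'..U, Ω (πU u) (πV v) ^ 2)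
      MeasureTheory.volume V' V :=
    Continuous.intervalIntegrable (continuous_const.mul hΦcont) _ _
  -- rewrite the double integral of G
  have outer_eq : (∫ v in V'..V, ∫ u in U'..U, G u v)
      = ∫ v in V'..V,
          (ψ U v - ψ U' v + 1 / 4 * ∫ u in U'..U, Ω (πU u) (πV v) ^ 2) := by
    apply intervalIntegral.integral_congr_ae
    have hne : ∀ᵐ x : ℝ ∂MeasureTheory.volume, x ∉ ({V} : Set ℝ) :=
      MeasureTheory.measure_eq_zero_iff_ae_notMem.mp (MeasureTheory.measure_singleton V)
    filter_upwards [hne] with x hx hxI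
    rw [uIoc_of_le hV] at hxI
    have hxIoo : x ∈ Ioo V' V := ⟨hxI.1, lt_of_le_of_ne hxI.2 (fun h => hx (by simp [h]))⟩
    rw [inner_eq x hxIoo]
    have hcongr : (∫ u in U'..U, Ω u x ^ 2) = ∫ u in U'..U, Ω (πU u) (πV x) ^ 2 := by
      apply intervalIntegral.integral_congr
      intro t ht
      rw [uIcc_of_le hU] at ht
      simp only
      rw [hπUid t ht, hπVid x (Ioo_subset_Icc_self hxIoo)]
    rw [hcongr]
  have split : (∫ v in V'..V,
        (ψ U v - ψ U' v + 1 / 4 * ∫ u in U'..U, Ω (πU u) (πV v) ^ 2))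
      = (∫ v in V'..V, ψ U v) - (∫ v in V'..V, ψ U' v)
        + 1 / 4 * ∫ v in V'..V, ∫ u in U'..U, Ω (πU u) (πV v) ^ 2 := by
    rw [intervalIntegral.integral_add (hψUi.sub hψU'i) hΦi,
      intervalIntegral.integral_sub hψUi hψU'i, intervalIntegral.integral_const_mul]
  have clampΩ : (∫ v in V'..V, ∫ u in U'..U, Ω (πU u) (πV v) ^ 2)
      = ∫ v in V'..V, ∫ u in U'..U, Ω u v ^ 2 := by
    apply intervalIntegral.integral_congr
    intro x hx
    rw [uIcc_of_le hV] at hx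
    apply intervalIntegral.integral_congr
    intro t ht
    rw [uIcc_of_le hU] at ht
    simp only
    rw [hπUid t ht, hπVid x hx]
  -- finish
  have hUi : U ∈ Icc U' U := right_mem_Icc.mpr hU
  have hU'i : U' ∈ Icc U' U := left_mem_Icc.mpr hU
  have hVi : V ∈ Icc V' V := right_mem_Icc.mpr hV
  have hV'i : V' ∈ Icc V' V := left_mem_Icc.mpr hV
  rw [outer_eq, split, bdry U hUi, bdry U' hU'i, clampΩ]
  have q1 : r U V ^ 2 ≤ R ^ 2 :=
    pow_le_pow_left₀ (le_trans hr₀.le (hrlow U hUi V hVi)) (hrhigh U hUi V hVi) 2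
  have q2 : r₀ ^ 2 ≤ r U V' ^ 2 := pow_le_pow_left₀ hr₀.le (hrlow U hUi V' hV'i) 2
  have q3 : r₀ ^ 2 ≤ r U' V ^ 2 := pow_le_pow_left₀ hr₀.le (hrlow U' hU'i V hVi) 2
  have q4 : r U' V' ^ 2 ≤ R ^ 2 :=
    pow_le_pow_left₀ (le_trans hr₀.le (hrlow U' hU'i V' hV'i)) (hrhigh U' hU'i V' hV'i) 2
  linarith
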